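/- Let β > 0, let ν be a measure on a measurable space X, and let g, f : X → [0,∞) be measurable functions such that f^(1+β), f^β·g and g^(1+β) are all ν-integrable. Then the density power divergence d_β(g,f) = ∫ ( f^(1+β) − (1+1/β)·f^β·g + (1/β)·g^(1+β) ) dν satisfies d_β(g,f) ≥ 0, and d_β(g,f) = 0 if and only if f = g ν-almost everywhere. -/

import Mathlib

open MeasureTheory

lemma dpd_key_eq {β a : ℝ} (hβ : 0 < β) (ha : 0 ≤ a) :
    a ^ (1 + β) - (1 + 1 / β) * a ^ β * a + (1 / β) * a ^ (1 + β) = 0 := by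
  rw [Real.rpow_one_add' ha (by positivity)]
  field_simp
  ring

lemma dpd_key_pos {β a b : ℝ} (hβ : 0 < β) (ha : 0 ≤ a) (hb : 0 ≤ b) (hab : a ≠ b) :
    0 < a ^ (1 + β) - (1 + 1 / β) * a ^ β * b + (1 / β) * b ^ (1 + β) := by
  rcases eq_or_lt_of_le ha with rfl | ha'
  · rw [Real.zero_rpow (by positivity), Real.zero_rpow (ne_of_gt hβ)]
    have hb' : 0 < b := lt_of_le_of_ne hb (fun h => hab h)
    have := Real.rpow_pos_of_pos hb' (1 + β)
    have h1 : 0 < 1 / β := by positivity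
    nlinarith
  · -- a > 0 case: Bernoulli
    set s := (b - a) / a with hs
    have hs1 : -1 ≤ s := by
      rw [hs, le_div_iff₀ ha']
      linarith
    have hs0 : s ≠ 0 := by
      rw [hs]
      intro h
      apply hab
      field_simp at h
      linarith
    have hp : 1 < 1 + β := by linarith
    have hB := one_add_mul_self_lt_rpow_one_add hs1 hs0 hp
    have hone : (1 : ℝ) + s = b / a := by field_simp [hs]; rw [hs, add_mul, div_mul_cancel₀ _ (ne_of_gt ha')]; ring
    have hpow : (1 + s) ^ (1 + β) = b ^ (1 + β) / a ^ (1 + β) := by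
      rw [hone, Real.div_rpow hb ha]
    have hA : 0 < a ^ (1 + β) := Real.rpow_pos_of_pos ha' _
    have haβ : a ^ (1 + β) = a * a ^ β := Real.rpow_one_add' ha (by positivity)
    -- multiply Bernoulli by a^(1+β)
    have h2 : a ^ (1 + β) * (1 + (1 + β) * s) < b ^ (1 + β) := by
      calc a ^ (1 + β) * (1 + (1 + β) * s) < a ^ (1 + β) * (1 + s) ^ (1 + β) := by
            exact (mul_lt_mul_iff_right₀ hA).2 hB
        _ = b ^ (1 + β) := by rw [hpow]; field_simp
    have h3 : a ^ (1 + β) * (1 + (1 + β) * s) = (1 + β) * a ^ β * b - β * a ^ (1 + β) := by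
      rw [hs, haβ]
      field_simp
      ring
    rw [h3] at h2
    have h4 : 0 < 1 / β := by positivity
    have hβ' := hβ
    rw [div_pos_iff] at h4
    have : β * (a ^ (1 + β) - (1 + 1 / β) * a ^ β * b + (1 / β) * b ^ (1 + β)) =
        b ^ (1 + β) - ((1 + β) * a ^ β * b - β * a ^ (1 + β)) := by
      field_simp
      ring
    nlinarith [this]

lemma dpd_key_nonneg {β a b : ℝ} (hβ : 0 < β) (ha : 0 ≤ a) (hb : 0 ≤ b) :
    0 ≤ a ^ (1 + β) - (1 + 1 / β) * a ^ β * b + (1 / β) * b ^ (1 + β) := by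
  rcases eq_or_ne a b with rfl | hab
  · exact le_of_eq (dpd_key_eq hβ ha).symm
  · exact le_of_lt (dpd_key_pos hβ ha hb hab)

lemma dpd_key_eq_zero_iff {β a b : ℝ} (hβ : 0 < β) (ha : 0 ≤ a) (hb : 0 ≤ b) :
    a ^ (1 + β) - (1 + 1 / β) * a ^ β * b + (1 / β) * b ^ (1 + β) = 0 ↔ a = b := by
  constructor
  · intro h
    by_contra hab
    exact (ne_of_gt (dpd_key_pos hβ ha hb hab)).symm h.symm
  · rintro rfl
    exact dpd_key_eq hβ ha

theorem dpd_nonneg_and_eq_zero_iff {X : Type*} [MeasurableSpace X] (ν : Measure X)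
    (β : ℝ) (hβ : 0 < β) (g f : X → ℝ)
    (hg : Measurable g) (hf : Measurable f)
    (hgnn : ∀ x, 0 ≤ g x) (hfnn : ∀ x, 0 ≤ f x)
    (hint1 : Integrable (fun x => f x ^ (1 + β)) ν)
    (hint2 : Integrable (fun x => f x ^ β * g x) ν)
    (hint3 : Integrable (fun x => g x ^ (1 + β)) ν) :
    0 ≤ ∫ x, (f x ^ (1 + β) - (1 + 1 / β) * f x ^ β * g x + (1 / β) * g x ^ (1 + β)) ∂ν ∧
    ((∫ x, (f x ^ (1 + β) - (1 + 1 / β) * f x ^ β * g x + (1 / β) * g x ^ (1 + β)) ∂ν) = 0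
      ↔ f =ᵐ[ν] g) := by
  set h : X → ℝ := fun x => f x ^ (1 + β) - (1 + 1 / β) * f x ^ β * g x + (1 / β) * g x ^ (1 + β)
    with hh
  have hint : Integrable h ν := by
    apply Integrable.add
    · apply Integrable.sub hint1
      simpa [mul_assoc] using hint2.const_mul (1 + 1 / β)
    · exact hint3.const_mul (1 / β)
  have hnn : ∀ x, 0 ≤ h x := fun x => dpd_key_nonneg hβ (hfnn x) (hgnn x)
  refine ⟨integral_nonneg hnn, ?_⟩
  rw [integral_eq_zero_iff_of_nonneg hnn hint]
  constructor
  · intro hz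
    filter_upwards [hz] with x hx
    exact (dpd_key_eq_zero_iff hβ (hfnn x) (hgnn x)).1 hx
  · intro hz
    filter_upwards [hz] with x hx
    exact (dpd_key_eq_zero_iff hβ (hfnn x) (hgnn x)).2 hx
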